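/- arXiv:2510.03492 — 4 statements merged into one kernel-verified Lean document; each statement's English description precedes it below -/
import Mathlib

section
/- Let Γ be a finitely generated mixed identity free group. Then for every finite collection w₁, …, w_k of nontrivial elements of Γ∗⟨x⟩ there exists a single element γ ∈ Γ such that w_i(γ) ≠ 1 for every i = 1, …, k. -/
open Matrix

/-- The free product `Γ ∗ ⟨x⟩` of a group `Γ` with an infinite cyclic group `⟨x⟩`. -/
abbrev MixedWordGroup (G : Type*) [Group G] : Type _ :=
  Monoid.Coprod G (Multiplicative ℤ)

/-- The distinguished generator `x` of the free factor `⟨x⟩` in `Γ ∗ ⟨x⟩`. -/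
def xGen (G : Type*) [Group G] : MixedWordGroup G :=
  Monoid.Coprod.inr (Multiplicative.ofAdd (1 : ℤ))

/-- Evaluation of a mixed word: the unique homomorphism `Γ ∗ ⟨x⟩ → Γ` restricting to the
identity on `Γ` and sending `x` to `γ`. -/
def evalWord {G : Type*} [Group G] (γ : G) : MixedWordGroup G →* G :=
  Monoid.Coprod.lift (MonoidHom.id G) (zpowersHom G γ)

/-- Word length of `g` with respect to the set `S`. -/
noncomputable def wordLength {G : Type*} [Group G] (S : Set G) (g : G) : ℕ :=
  sInf {n | ∃ l : List G, (∀ a ∈ l, a ∈ S) ∧ l.length = n ∧ l.prod = g}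

/-- The generating set `X ∪ {x, x⁻¹}` of `Γ ∗ ⟨x⟩`. -/
def mixedGenSet {G : Type*} [Group G] (X : Set G) : Set (MixedWordGroup G) :=
  (Monoid.Coprod.inl '' X) ∪ {xGen G, (xGen G)⁻¹}

namespace MIFAux

universe u

open Monoid Subgroup

/-- The two factors of `Γ ∗ ⟨x⟩`, as a `Bool`-indexed family. -/
def Fac (G : Type u) [Group G] : Bool → Type u
  | true => G
  | false => ULift (Multiplicative ℤ)

instance (G : Type u) [Group G] : ∀ b, Group (Fac G b)
  | true => inferInstanceAs (Group G)
  | false => inferInstanceAs (Group (ULift (Multiplicative ℤ)))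

variable {G : Type u} [Group G]

lemma bft : (false : Bool) ≠ true := by decide
lemma btf : (true : Bool) ≠ false := by decide

/-- The comparison map `Γ ∗ ⟨x⟩ →* CoprodI (Fac G)`. -/
def Phi : MixedWordGroup G →* Monoid.CoprodI (Fac G) :=
  Monoid.Coprod.lift
    (show G →* Monoid.CoprodI (Fac G) from Monoid.CoprodI.of (M := Fac G) (i := true))
    ((Monoid.CoprodI.of (M := Fac G) (i := false)).comp (MulEquiv.ulift.symm.toMonoidHom))

/-- The inverse family. -/
def fam : ∀ b : Bool, Fac G b →* MixedWordGroup G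
  | true => Monoid.Coprod.inl
  | false => Monoid.Coprod.inr.comp MulEquiv.ulift.toMonoidHom

def Psi : Monoid.CoprodI (Fac G) →* MixedWordGroup G := Monoid.CoprodI.lift fam

lemma Psi_Phi (h : MixedWordGroup G) : Psi (Phi h) = h := by
  have : (Psi.comp (Phi (G := G))) = MonoidHom.id _ := by
    apply Monoid.Coprod.hom_ext
    · ext g
      show Monoid.CoprodI.lift fam (Monoid.CoprodI.of (M := Fac G) (i := true) g)
        = Monoid.Coprod.inl g
      refine (Monoid.CoprodI.lift_of fam (i := true) g).trans ?_
      rfl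
    · ext z
      show Monoid.CoprodI.lift fam
          (Phi (Monoid.Coprod.inr (Multiplicative.ofAdd (1 : ℤ)))) = _
      simp only [Phi, Monoid.Coprod.lift_apply_inr, MonoidHom.comp_apply,
        MulEquiv.coe_toMonoidHom, Monoid.CoprodI.lift_of]
      show Monoid.Coprod.inr (MulEquiv.ulift (MulEquiv.ulift.symm _)) = _
      rw [MulEquiv.apply_symm_apply]
      rfl
  calc Psi (Phi h) = (Psi.comp (Phi (G := G))) h := rfl
    _ = h := by rw [this]; rfl

lemma Phi_injective : Function.Injective (Phi (G := G)) :=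
  Function.LeftInverse.injective Psi_Phi

lemma Phi_ne_one {u : MixedWordGroup G} (hu : u ≠ 1) : Phi u ≠ 1 := by
  intro h
  exact hu (Phi_injective (by simpa using h))

lemma Phi_inl (g : G) :
    Phi (Monoid.Coprod.inl g) = Monoid.CoprodI.of (M := Fac G) (i := true) g := rfl

/-- The letter `x^n` in the `false` factor. -/
def zeta (G : Type u) [Group G] (n : ℤ) : Fac G false := ULift.up (Multiplicative.ofAdd n)

/-- `x^n` as an element of `Γ ∗ ⟨x⟩`. -/
def xp (G : Type u) [Group G] (n : ℤ) : MixedWordGroup G :=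
  Monoid.Coprod.inr (Multiplicative.ofAdd n)

lemma Phi_xp (n : ℤ) : Phi (xp G n) = Monoid.CoprodI.of (zeta G n) := by
  simp [Phi, xp, zeta, Monoid.Coprod.lift_apply_inr]
  rfl

lemma zeta_mul (m n : ℤ) : zeta G m * zeta G n = zeta G (m + n) := rfl

lemma zeta_ne_one {n : ℤ} (hn : n ≠ 0) : zeta G n ≠ 1 := by
  intro h
  have : (Multiplicative.ofAdd n).toAdd = (1 : Multiplicative ℤ).toAdd :=
    congrArg (fun t : Fac G false => t.down.toAdd) h
  simp at this
  exact hn this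

lemma xp_inv (n : ℤ) : (xp G n)⁻¹ = xp G (-n) := by
  rw [xp, xp, ofAdd_neg, _root_.map_inv]

lemma xGen_eq : xGen G = xp G 1 := rfl

/-- Nonempty reduced words have nontrivial product. -/
lemma neword_prod_ne_one {ι : Type*} {M : ι → Type*} [∀ i, Monoid (M i)]
    [DecidableEq ι] [∀ i, DecidableEq (M i)] {i j : ι}
    (W : Monoid.CoprodI.NeWord M i j) : W.prod ≠ 1 := by
  intro h
  have h2 : Monoid.CoprodI.Word.prod W.toWord
      = Monoid.CoprodI.Word.prod (Monoid.CoprodI.Word.empty) := by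
    simpa [Monoid.CoprodI.NeWord.prod, Monoid.CoprodI.Word.prod_empty] using h
  have h3 : W.toWord = Monoid.CoprodI.Word.empty :=
    (Monoid.CoprodI.Word.equiv (M := M)).symm.injective h2
  have h4 := W.toList_ne_nil
  rw [show W.toList = W.toWord.toList from rfl, h3] at h4
  exact h4 rfl

/-- If a mixed word evaluates to 1 at `γ`, then so does every element of its normal closure. -/
lemma eval_normalClosure {γ : G} {u e : MixedWordGroup G}
    (he : e ∈ Subgroup.normalClosure ({u} : Set (MixedWordGroup G))) (hu : evalWord γ u = 1) :
    evalWord γ e = 1 := by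
  have hle : Subgroup.normalClosure ({u} : Set (MixedWordGroup G)) ≤ (evalWord γ).ker :=
    Subgroup.normalClosure_le_normal (by simpa [MonoidHom.mem_ker] using hu)
  simpa [MonoidHom.mem_ker] using hle he

/-- Niceness: the normal closure of `u` contains an element whose reduced word starts with
an `x`-letter and ends with a `Γ`-letter. -/
def Nice (u : MixedWordGroup G) : Prop :=
  ∃ α, α ∈ Subgroup.normalClosure ({u} : Set (MixedWordGroup G)) ∧
    ∃ W : Monoid.CoprodI.NeWord (Fac G) false true, W.prod = Phi α

section NiceConstruction

variable [DecidableEq G]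

lemma nice_of_tt {u c : MixedWordGroup G}
    (hc : c ∈ Subgroup.normalClosure ({u} : Set (MixedWordGroup G)))
    {g₀ : G} (hg : g₀ ≠ 1)
    (V : Monoid.CoprodI.NeWord (Fac G) true true) (hV : V.prod = Phi c) : Nice u := by
  classical
  have h1 : zeta G 1 ≠ 1 := zeta_ne_one one_ne_zero
  have hm1 : zeta G (-1) ≠ 1 := zeta_ne_one (by norm_num)
  have hg' : (g₀ : Fac G true) ≠ 1 := hg
  have hginv : ((g₀⁻¹ : G) : Fac G true) ≠ 1 := inv_ne_one.mpr hg
  -- C = x c x⁻¹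
  let C : Monoid.CoprodI.NeWord (Fac G) false false :=
    ((Monoid.CoprodI.NeWord.singleton (zeta G 1) h1).append bft V).append btf
      (Monoid.CoprodI.NeWord.singleton (zeta G (-1)) hm1)
  let W : Monoid.CoprodI.NeWord (Fac G) false true :=
    ((C.append bft (Monoid.CoprodI.NeWord.singleton (g₀ : Fac G true) hg')).append
      btf C).append bft
      (Monoid.CoprodI.NeWord.singleton ((g₀⁻¹ : G) : Fac G true) hginv)
  refine ⟨(xp G 1 * c * xp G (-1)) * (Monoid.Coprod.inl g₀ * (xp G 1 * c * xp G (-1)) *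
    (Monoid.Coprod.inl g₀)⁻¹), ?_, W, ?_⟩
  · have hx : xp G 1 * c * xp G (-1) ∈ Subgroup.normalClosure ({u} : Set (MixedWordGroup G)) := by
      have := (Subgroup.normalClosure_normal (s := ({u} : Set (MixedWordGroup G)))).conj_mem c hc (xp G 1)
      simpa [xp_inv] using this
    exact mul_mem hx
      ((Subgroup.normalClosure_normal (s := ({u} : Set (MixedWordGroup G)))).conj_mem _ hx
        (Monoid.Coprod.inl g₀))
  · have hCprod : C.prod =
        Monoid.CoprodI.of (zeta G 1) * Phi c * Monoid.CoprodI.of (zeta G (-1)) := by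
      simp [C, Monoid.CoprodI.NeWord.append_prod, Monoid.CoprodI.NeWord.prod_singleton, hV]
    have : W.prod = C.prod * Monoid.CoprodI.of (M := Fac G) (i := true) g₀ * C.prod *
        Monoid.CoprodI.of (M := Fac G) (i := true) g₀⁻¹ := by
      simp [W, Monoid.CoprodI.NeWord.append_prod, Monoid.CoprodI.NeWord.prod_singleton, mul_assoc]
      erw [Monoid.CoprodI.NeWord.prod_singleton, Monoid.CoprodI.NeWord.prod_singleton]
      rfl
    rw [this, hCprod]
    simp [_root_.map_mul, _root_.map_inv, Phi_xp, Phi_inl, mul_assoc]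
    exact _root_.map_inv (Monoid.CoprodI.of (M := Fac G) (i := true)) g₀

lemma exists_nice {g₀ : G} (hg : g₀ ≠ 1) {u : MixedWordGroup G} (hu : u ≠ 1) : Nice u := by
  classical
  have hPhiu : Phi u ≠ 1 := Phi_ne_one hu
  -- get a reduced word for `Phi u`
  have hw : (Monoid.CoprodI.Word.equiv (Phi u)).prod = Phi u :=
    (Monoid.CoprodI.Word.equiv (M := Fac G)).symm_apply_apply (Phi u)
  have hne : Monoid.CoprodI.Word.equiv (Phi u) ≠ Monoid.CoprodI.Word.empty := by
    intro h
    rw [h, Monoid.CoprodI.Word.prod_empty] at hw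
    exact hPhiu hw.symm
  obtain ⟨i, j, U, hU⟩ := Monoid.CoprodI.NeWord.of_word _ hne
  have hUprod : U.prod = Phi u := by
    rw [Monoid.CoprodI.NeWord.prod, hU, hw]
  have husing : u ∈ Subgroup.normalClosure ({u} : Set (MixedWordGroup G)) :=
    Subgroup.subset_normalClosure rfl
  match i, j, U, hUprod with
  | false, true, U, hUprod => exact ⟨u, husing, U, hUprod⟩
  | true, false, U, hUprod =>
    exact ⟨u⁻¹, inv_mem husing, U.inv, by
      rw [Monoid.CoprodI.NeWord.inv_prod, hUprod, ← _root_.map_inv]⟩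
  | true, true, U, hUprod => exact nice_of_tt husing hg U hUprod
  | false, false, U, hUprod =>
    -- conjugate by g₀ to get a (true,true) word
    have hg' : (g₀ : Fac G true) ≠ 1 := hg
    have hginv : ((g₀⁻¹ : G) : Fac G true) ≠ 1 := inv_ne_one.mpr hg
    let V : Monoid.CoprodI.NeWord (Fac G) true true :=
      ((Monoid.CoprodI.NeWord.singleton (g₀ : Fac G true) hg').append btf U).append
        bft (Monoid.CoprodI.NeWord.singleton ((g₀⁻¹ : G) : Fac G true) hginv)
    have hc : Monoid.Coprod.inl g₀ * u * (Monoid.Coprod.inl g₀)⁻¹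
        ∈ Subgroup.normalClosure ({u} : Set (MixedWordGroup G)) :=
      (Subgroup.normalClosure_normal (s := ({u} : Set (MixedWordGroup G)))).conj_mem u husing _
    refine nice_of_tt hc hg V ?_
    simp [V, Monoid.CoprodI.NeWord.append_prod, Monoid.CoprodI.NeWord.prod_singleton,
      hUprod, _root_.map_mul, _root_.map_inv, Phi_inl, mul_assoc]
    erw [Monoid.CoprodI.NeWord.prod_singleton, Monoid.CoprodI.NeWord.prod_singleton]
    exact congrArg _ (congrArg _ (_root_.map_inv (Monoid.CoprodI.of (M := Fac G) (i := true)) g₀))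

/-- The key combinatorial lemma: normal closures of nontrivial elements of `Γ ∗ ⟨x⟩`
intersect nontrivially. -/
lemma key {u v : MixedWordGroup G} (hu : Nice u) (hv : Nice v) :
    ∃ z : MixedWordGroup G, z ≠ 1 ∧
      z ∈ Subgroup.normalClosure ({u} : Set (MixedWordGroup G)) ∧
      z ∈ Subgroup.normalClosure ({v} : Set (MixedWordGroup G)) := by
  classical
  obtain ⟨α, hα, A, hA⟩ := hu
  obtain ⟨β, hβ, B, hB⟩ := hv
  set p : ℤ := (A.head.down).toAdd with hp
  set q : ℤ := (B.head.down).toAdd with hq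
  set N : ℤ := |p| + |q| + 1 with hN
  have hap : p ≤ |p| := le_abs_self p
  have haq : -|q| ≤ q := neg_abs_le q
  have hpq : 0 ≤ |p| := abs_nonneg p
  have hqq : 0 ≤ |q| := abs_nonneg q
  -- head conditions
  have headB : B.head = zeta G q := by
    simp only [zeta, hq]
    rfl
  have headA : A.head = zeta G p := by
    simp only [zeta, hp]
    rfl
  have h2 : zeta G N * B.head ≠ 1 := by
    rw [headB, zeta_mul]
    exact zeta_ne_one (by omega)
  have h3 : zeta G (-N) * A.head ≠ 1 := by
    rw [headA, zeta_mul]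
    exact zeta_ne_one (by omega)
  have hsg : zeta G (-N) ≠ 1 := zeta_ne_one (by omega)
  let W2 : Monoid.CoprodI.NeWord (Fac G) false false :=
    (B.mulHead (zeta G N) h2).append btf
      (Monoid.CoprodI.NeWord.singleton (zeta G (-N)) hsg)
  let W3 : Monoid.CoprodI.NeWord (Fac G) true false := (A.mulHead (zeta G (-N)) h3).inv
  let W4 : Monoid.CoprodI.NeWord (Fac G) true false := (B.mulHead (zeta G N) h2).inv
  let W : Monoid.CoprodI.NeWord (Fac G) false false :=
    ((A.append btf W2).append bft W3).append bft W4
  set c : MixedWordGroup G := xp G N * β * xp G (-N) with hc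
  set z : MixedWordGroup G := α * c * α⁻¹ * c⁻¹ with hz
  have hzform : z = α * (xp G N * β * xp G (-N)) * ((xp G (-N) * α)⁻¹) * ((xp G N * β)⁻¹) := by
    rw [hz, hc]
    simp [_root_.mul_inv_rev, xp_inv, neg_neg, mul_assoc]
  have hWprod : W.prod = Phi z := by
    have : W.prod = A.prod *
        ((Monoid.CoprodI.of (zeta G N) * B.prod) * Monoid.CoprodI.of (zeta G (-N))) *
        (Monoid.CoprodI.of (zeta G (-N)) * A.prod)⁻¹ *
        (Monoid.CoprodI.of (zeta G N) * B.prod)⁻¹ := by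
      simp [W, W2, W3, W4, Monoid.CoprodI.NeWord.append_prod,
        Monoid.CoprodI.NeWord.prod_singleton, Monoid.CoprodI.NeWord.inv_prod,
        Monoid.CoprodI.NeWord.mulHead_prod, mul_assoc]
    rw [this, hA, hB, hzform]
    simp [_root_.map_mul, _root_.map_inv, Phi_xp, mul_assoc]
  refine ⟨z, ?_, ?_, ?_⟩
  · intro h
    rw [h, _root_.map_one] at hWprod
    exact neword_prod_ne_one W hWprod
  · -- z = α * (c * α⁻¹ * c⁻¹)
    have : z = α * (c * α⁻¹ * c⁻¹) := by rw [hz]; group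
    rw [this]
    exact mul_mem hα
      ((Subgroup.normalClosure_normal (s := ({u} : Set (MixedWordGroup G)))).conj_mem _ (inv_mem hα) c)
  · -- z = (α * c * α⁻¹) * c⁻¹
    have hcmem : c ∈ Subgroup.normalClosure ({v} : Set (MixedWordGroup G)) := by
      have := (Subgroup.normalClosure_normal (s := ({v} : Set (MixedWordGroup G)))).conj_mem β hβ (xp G N)
      simpa [hc, xp_inv] using this
    have : z = (α * c * α⁻¹) * c⁻¹ := by rw [hz]
    rw [this]
    exact mul_mem
      ((Subgroup.normalClosure_normal (s := ({v} : Set (MixedWordGroup G)))).conj_mem _ hcmem α)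
      (inv_mem hcmem)

end NiceConstruction

end MIFAux

theorem stmt4 {G : Type*} [Group G] (hfg : Group.FG G)
    (hMIF : ∀ w : MixedWordGroup G, w ≠ 1 → ∃ γ : G, evalWord γ w ≠ 1)
    (k : ℕ) (w : Fin k → MixedWordGroup G) (hw : ∀ i, w i ≠ 1) :
    ∃ γ : G, ∀ i, evalWord γ (w i) ≠ 1 := by
  classical
  open MIFAux Subgroup in
  -- a nontrivial element of G
  have hxGen : (xGen G) ≠ 1 := by
    intro h
    have : Phi (xGen G) = 1 := by rw [h, _root_.map_one]
    rw [xGen_eq, Phi_xp] at this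
    have h1 : zeta G 1 ≠ 1 := zeta_ne_one one_ne_zero
    have := neword_prod_ne_one (Monoid.CoprodI.NeWord.singleton (zeta G 1) h1)
    rw [Monoid.CoprodI.NeWord.prod_singleton] at this
    exact this ‹Monoid.CoprodI.of (zeta G 1) = 1›
  obtain ⟨g₀, hg₀⟩ : ∃ g : G, g ≠ 1 := by
    obtain ⟨γ, hγ⟩ := hMIF (xGen G) hxGen
    refine ⟨γ, ?_⟩
    intro h
    apply hγ
    rw [h]
    simp [evalWord, xGen, Monoid.Coprod.lift_apply_inr]
  have hinl : (Monoid.Coprod.inl g₀ : MixedWordGroup G) ≠ 1 := by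
    intro h
    have : evalWord (1 : G) (Monoid.Coprod.inl g₀) = 1 := by rw [h, _root_.map_one]
    rw [evalWord, Monoid.Coprod.lift_apply_inl] at this
    exact hg₀ this
  -- main list lemma
  have main : ∀ l : List (MixedWordGroup G), (∀ u ∈ l, u ≠ 1) →
      ∃ z : MixedWordGroup G, z ≠ 1 ∧
        ∀ u ∈ l, z ∈ Subgroup.normalClosure ({u} : Set (MixedWordGroup G)) := by
    intro l
    induction l with
    | nil => exact fun _ => ⟨Monoid.Coprod.inl g₀, hinl, by simp⟩
    | cons u t ih =>
      intro h
      obtain ⟨z, hz1, hz2⟩ := ih (fun a ha => h a (List.mem_cons_of_mem _ ha))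
      obtain ⟨y, hy1, hy2, hy3⟩ := key (exists_nice hg₀ (h u (List.mem_cons_self)))
          (exists_nice hg₀ hz1)
      refine ⟨y, hy1, ?_⟩
      intro a ha
      rcases List.mem_cons.mp ha with rfl | ha
      · exact hy2
      · have hle : Subgroup.normalClosure ({z} : Set (MixedWordGroup G)) ≤
            Subgroup.normalClosure ({a} : Set (MixedWordGroup G)) :=
          Subgroup.normalClosure_le_normal (Set.singleton_subset_iff.mpr (hz2 a ha))
        exact hle hy3
  obtain ⟨z, hz1, hz2⟩ := main ((List.finRange k).map w)
    (by
      intro u hu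
      obtain ⟨i, _, rfl⟩ := List.mem_map.mp hu
      exact hw i)
  obtain ⟨γ, hγ⟩ := hMIF z hz1
  refine ⟨γ, fun i => ?_⟩
  intro h
  apply hγ
  exact eval_normalClosure (hz2 (w i) (List.mem_map.mpr ⟨i, List.mem_finRange i, rfl⟩)) h
end

section
/- Let Γ be a group containing a nontrivial subgroup A that is virtually solvable (i.e., A has a solvable subgroup of finite index) and whose normalizer N_Γ(A) has finite index in Γ. Then Γ satisfies a nontrivial mixed identity: there exists w ∈ Γ∗⟨x⟩ with w ≠ 1 such that w(γ) = 1 for every γ ∈ Γ. -/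
open Matrix

open Monoid
open scoped commutatorElement

namespace MixedAux

section Abstract
variable {H : Type*} [Group H]

lemma shift_pow (x y : H) (n : ℕ) : (x * y) ^ n * x = x * (y * x) ^ n := by
  induction n with
  | zero => simp
  | succ n ih =>
    rw [pow_succ, pow_succ]
    calc (x * y) ^ n * (x * y) * x = (x * y) ^ n * x * (y * x) := by
          simp only [mul_assoc]
    _ = x * (y * x) ^ n * (y * x) := by rw [ih]
    _ = x * ((y * x) ^ n * (y * x)) := by rw [mul_assoc]

lemma abstract_base (u b v : H) (n : ℕ) :
    (u * b * u⁻¹ * b⁻¹) ^ (n+1) * (b * v * b⁻¹ * v⁻¹) ^ (n+1)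
      = u * ((b * u⁻¹ * b⁻¹ * u) ^ n
          * (b * ((u⁻¹ * v) * ((b⁻¹ * v⁻¹ * b * v) ^ n * (b⁻¹ * (v⁻¹ * 1)))))) := by
  have e1 : u * b * u⁻¹ * b⁻¹ = u * (b * u⁻¹ * b⁻¹) := by simp only [mul_assoc]
  have id1 : (u * b * u⁻¹ * b⁻¹) ^ (n+1) = u * (b * u⁻¹ * b⁻¹ * u) ^ n * (b * u⁻¹ * b⁻¹) := by
    rw [e1, pow_succ, ← mul_assoc, shift_pow u (b * u⁻¹ * b⁻¹) n]
  have id2 : (b * v * b⁻¹ * v⁻¹) ^ (n+1)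
      = b * v * b⁻¹ * (v⁻¹ * (b * v * b⁻¹)) ^ n * v⁻¹ := by
    rw [pow_succ, ← mul_assoc, shift_pow (b * v * b⁻¹) v⁻¹ n]
  have id3 : (b⁻¹ * v⁻¹ * b * v) ^ n = b⁻¹ * (v⁻¹ * (b * v * b⁻¹)) ^ n * b := by
    have e3 : b⁻¹ * v⁻¹ * b * v = b⁻¹ * (v⁻¹ * (b * v * b⁻¹)) * b⁻¹⁻¹ := by
      simp only [inv_inv, mul_assoc, inv_mul_cancel_left, mul_inv_cancel_left,
        inv_mul_cancel, mul_inv_cancel, mul_one, one_mul]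
    rw [e3, conj_pow, inv_inv]
  rw [id1, id2, id3]
  simp only [mul_one, one_mul, mul_assoc, inv_mul_cancel_left, mul_inv_cancel_left,
    inv_mul_cancel, mul_inv_cancel]

/-- Iterated commutator along a binary tree of depth `d`. -/
def itc (g : ℕ → H) : ℕ → ℕ → H
  | 0, j => g j
  | d+1, j => ⁅itc g d j, itc g d (j + 2^d)⁆

lemma itc_mem_derivedSeries (g : ℕ → H) :
    ∀ d j, itc g d j ∈ derivedSeries H d := by
  intro d
  induction d with
  | zero => intro j; simp [itc]
  | succ d ih =>
    intro j
    rw [itc, derivedSeries_succ]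
    exact Subgroup.commutator_mem_commutator (ih j) (ih (j + 2^d))

lemma map_itc {H' : Type*} [Group H'] (f : H →* H') (g : ℕ → H) :
    ∀ d j, f (itc g d j) = itc (fun i => f (g i)) d j := by
  intro d
  induction d with
  | zero => intro j; simp [itc]
  | succ d ih => intro j; rw [itc, itc, map_commutatorElement, ih, ih]

end Abstract

universe u
variable {G : Type u} [Group G]

/-- The two-factor family for `CoprodI`. -/
def F (G : Type u) [Group G] : Bool → Type u := fun b => cond b G (ULift (Multiplicative ℤ))

instance : ∀ b, Group (F G b) := fun b => match b with
  | true => inferInstanceAs (Group G)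
  | false => inferInstanceAs (Group (ULift (Multiplicative ℤ)))

noncomputable instance : ∀ b, DecidableEq (F G b) := fun _ => Classical.decEq _

/-- the `G`-letter -/
def gl (g : G) : CoprodI (F G) := CoprodI.of (i := true) g

/-- the `x`-letter -/
def xl (z : ℤ) : CoprodI (F G) := CoprodI.of (i := false) (ULift.up (Multiplicative.ofAdd z))

lemma xl_mul (z z' : ℤ) : xl (z + z') = (xl z : CoprodI (F G)) * xl z' := by
  unfold xl; refine (congrArg (CoprodI.of (M := F G) (i := false)) ?_).trans (_root_.map_mul _ _ _); exact ULift.ext _ _ (ofAdd_add z z')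

lemma xl_zero : (xl 0 : CoprodI (F G)) = 1 := by
  unfold xl
  exact _root_.map_one (CoprodI.of (M := F G) (i := false))

lemma xl_inv (z : ℤ) : (xl z : CoprodI (F G))⁻¹ = xl (-z) := by
  rw [inv_eq_iff_mul_eq_one, ← xl_mul]; simp [xl_zero]

lemma gl_mul (g g' : G) : gl (g * g') = (gl g : CoprodI (F G)) * gl g' := _root_.map_mul _ _ _

lemma gl_inv (g : G) : (gl g : CoprodI (F G))⁻¹ = gl g⁻¹ := by
  rw [inv_eq_iff_mul_eq_one, ← gl_mul]; simp [gl]; exact _root_.map_one (CoprodI.of (M := F G) (i := true))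

def pprod (l : List (G × ℤ)) : CoprodI (F G) := (l.map fun p => gl p.1 * xl p.2).prod

def E (z : ℤ) (l : List (G × ℤ)) : CoprodI (F G) := xl z * pprod l

lemma pprod_append (l l' : List (G × ℤ)) :
    pprod (l ++ l') = (pprod l : CoprodI (F G)) * pprod l' := by
  unfold pprod; rw [List.map_append, List.prod_append]

lemma pprod_cons (p : G × ℤ) (l : List (G × ℤ)) :
    pprod (p :: l) = gl p.1 * xl p.2 * pprod l := by
  unfold pprod; rw [List.map_cons, List.prod_cons]

lemma pprod_nil : (pprod [] : CoprodI (F G)) = 1 := rfl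

lemma mergeE (z : ℤ) (l : List (G × ℤ)) (g : G) (ze z' : ℤ) (l' : List (G × ℤ)) :
    E z (l ++ [(g, ze)]) * E z' l' = E z (l ++ (g, ze + z') :: l') := by
  rw [E, E, E, pprod_append, pprod_append, pprod_cons, pprod_cons, pprod_nil, xl_mul]
  group

lemma mergeE' (z : ℤ) (l : List (G × ℤ)) (g : G) (ze z' : ℤ) (l' : List (G × ℤ)) (g' : G)
    (ze' : ℤ) :
    E z (l ++ [(g, ze)]) * E z' (l' ++ [(g', ze')])
      = E z ((l ++ (g, ze + z') :: l') ++ [(g', ze')]) := by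
  rw [mergeE]
  congr 1
  simp

lemma pprod_flatten_replicate (k : ℕ) (pat : List (G × ℤ)) :
    pprod ((List.replicate k pat).flatten) = (pprod pat : CoprodI (F G)) ^ k := by
  induction k with
  | zero => simp [pprod_nil]
  | succ k ih =>
    rw [List.replicate_succ, List.flatten_cons, pprod_append, ih, ← pow_succ']

lemma base_identity (a : G) (p q : ℤ) (n : ℕ) :
    (xl p * gl a * xl (-p) * gl a⁻¹) ^ (n+1) * (gl a * xl q * gl a⁻¹ * xl (-q)) ^ (n+1)
      = E p (((List.replicate n [(a,-p),(a⁻¹,p)]).flatten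
          ++ (a, q-p) :: (List.replicate n [(a⁻¹,-q),(a,q)]).flatten) ++ [(a⁻¹, -q)]) := by
  have key := abstract_base (xl p : CoprodI (F G)) (gl a) (xl q) n
  simp only [xl_inv, gl_inv] at key
  rw [show (q - p) = -p + q by ring]
  simp only [E, pprod_append, pprod_flatten_replicate, pprod_cons, pprod_nil, xl_mul,
    mul_one, mul_assoc]
  simp only [mul_one, mul_assoc] at key
  exact key



/-- letter in the `false` (ℤ) factor -/
def lxl (G : Type u) [Group G] (z : ℤ) : Σ b, F G b :=
  ⟨false, (ULift.up (Multiplicative.ofAdd z) : ULift (Multiplicative ℤ))⟩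

/-- letter in the `true` (G) factor -/
def lgl (g : G) : Σ b, F G b := ⟨true, (g : G)⟩

/-- alternating list of letters -/
def alt (z : ℤ) : List (G × ℤ) → List (Σ b, F G b)
  | [] => [lxl G z]
  | (g, z') :: l => lxl G z :: lgl g :: alt z' l

def Ok (l : List (G × ℤ)) : Prop := ∀ p ∈ l, p.1 ≠ (1 : G) ∧ p.2 ≠ 0

lemma Ok_append {l l' : List (G × ℤ)} : Ok (l ++ l') ↔ Ok l ∧ Ok l' := by
  simp only [Ok, List.mem_append, or_imp, forall_and]
  tauto

lemma Ok_cons {p : G × ℤ} {l : List (G × ℤ)} : Ok (p :: l) ↔ (p.1 ≠ 1 ∧ p.2 ≠ 0) ∧ Ok l := by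
  simp only [Ok, List.mem_cons, or_imp, forall_and, forall_eq]
  tauto

lemma alt_ne_nil (z : ℤ) (l : List (G × ℤ)) : alt z l ≠ [] := by
  cases l with
  | nil => simp [alt]
  | cons p l => cases p; simp [alt]

lemma alt_head (z : ℤ) (l : List (G × ℤ)) : (alt z l).head? = some (lxl G z) := by
  cases l with
  | nil => simp [alt]
  | cons p l => cases p; simp [alt]

lemma alt_chain (z : ℤ) (l : List (G × ℤ)) :
    (alt z l).Chain' fun a b => a.fst ≠ b.fst := by
  induction l generalizing z with
  | nil => simp [alt]; exact List.isChain_singleton _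
  | cons p l ih =>
    cases p with
    | mk g z' =>
      rw [alt]
      refine List.IsChain.cons_cons (by simp [lxl, lgl]) (List.IsChain.cons (ih z') ?_)
      intro b hb
      rw [alt_head] at hb
      simp only [Option.mem_def, Option.some.injEq] at hb
      subst hb
      simp [lxl, lgl]

lemma alt_ne_one (z : ℤ) (hz : z ≠ 0) (l : List (G × ℤ)) (hl : Ok l) :
    ∀ p ∈ alt z l, p.snd ≠ 1 := by
  induction l generalizing z with
  | nil =>
    simp only [alt, List.mem_singleton]
    rintro p rfl
    simp only [lxl, ne_eq]
    intro h
    apply hz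
    have h2 := congrArg ULift.down h
    exact ofAdd_eq_one.mp h2
  | cons p l ih =>
    cases p with
    | mk g z' =>
      rw [alt]
      intro q hq
      simp only [List.mem_cons] at hq
      rcases hq with hq | hq | hq
      · subst hq
        simp only [lxl, ne_eq]
        intro h
        apply hz
        have h2 := congrArg ULift.down h
        exact ofAdd_eq_one.mp h2
      · subst hq
        exact (hl (g, z') List.mem_cons_self).1
      · exact ih z' (hl (g, z') List.mem_cons_self).2
          (fun q hq => hl q (List.mem_cons_of_mem _ hq)) _ hq

lemma prod_alt (z : ℤ) (l : List (G × ℤ)) :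
    ((alt z l).map fun p => CoprodI.of p.snd).prod = E z l := by
  induction l generalizing z with
  | nil => simp [alt, E, pprod, lxl, xl]
  | cons p l ih =>
    cases p with
    | mk g z' =>
      rw [alt]
      simp only [List.map_cons, List.prod_cons, ih]
      simp [E, pprod, lxl, lgl, xl, gl, List.map_cons, List.prod_cons, mul_assoc]
      rfl

lemma E_ne_one (z : ℤ) (hz : z ≠ 0) (l : List (G × ℤ)) (hl : Ok l) :
    E z l ≠ (1 : CoprodI (F G)) := by
  intro h
  classical
  let w : CoprodI.Word (F G) := ⟨alt z l, alt_ne_one z hz l hl, alt_chain z l⟩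
  have hw : w.prod = 1 := by
    rw [CoprodI.Word.prod]
    exact (prod_alt z l).trans h
  have : w = CoprodI.Word.empty := by
    have hinj : Function.Injective (CoprodI.Word.prod : CoprodI.Word (F G) → CoprodI (F G)) :=
      (CoprodI.Word.equiv (M := F G)).symm.injective
    exact hinj (by rw [hw]; simp)
  exact alt_ne_nil z l (congrArg CoprodI.Word.toList this)

/-- first exponent of block `r` -/
def pexp (M : ℤ) (r : ℕ) : ℤ := (2*(r:ℤ)+1)*M
/-- second exponent of block `r` -/
def qexp (M : ℤ) (r : ℕ) : ℤ := (2*(r:ℤ)+2)*M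

/-- the basic block in the free product, as a two-parameter formula -/
def bb (a : G) (n : ℕ) (p q : ℤ) : CoprodI (F G) :=
  (xl p * gl a * xl (-p) * gl a⁻¹) ^ n * (gl a * xl q * gl a⁻¹ * xl (-q)) ^ n

/-- the `r`-th block -/
def blkC (a : G) (M : ℤ) (n : ℕ) (r : ℕ) : CoprodI (F G) :=
  bb a n (pexp M r) (qexp M r)

lemma bb_inv (a : G) (n : ℕ) (p q : ℤ) : (bb a n p q)⁻¹ = bb a n q p := by
  rw [bb, bb, _root_.mul_inv_rev, ← _root_.inv_pow, ← _root_.inv_pow]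
  congr 1
  · congr 1
    simp only [_root_.mul_inv_rev, xl_inv, gl_inv, inv_inv, neg_neg, mul_assoc]
  · congr 1
    simp only [_root_.mul_inv_rev, xl_inv, gl_inv, inv_inv, neg_neg, mul_assoc]

/-- the list for the normal form of `bb a (n+1) p q` -/
def bbList (a : G) (n : ℕ) (p q : ℤ) : List (G × ℤ) :=
  (List.replicate n [(a,-p),(a⁻¹,p)]).flatten
    ++ (a, q-p) :: (List.replicate n [(a⁻¹,-q),(a,q)]).flatten

lemma bb_eq (a : G) (n : ℕ) (p q : ℤ) :
    bb a (n+1) p q = E p (bbList a n p q ++ [(a⁻¹, -q)]) :=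
  base_identity a p q n

lemma Ok_bbList {a : G} (ha : a ≠ 1) {n : ℕ} {p q : ℤ} (hp : p ≠ 0) (hq : q ≠ 0)
    (hpq : q - p ≠ 0) : Ok (bbList a n p q) := by
  have ha' : a⁻¹ ≠ 1 := inv_ne_one.mpr ha
  intro x hx
  simp only [bbList, List.mem_append, List.mem_cons, List.mem_flatten,
    List.mem_replicate] at hx
  rcases hx with ⟨l, ⟨-, rfl⟩, hl⟩ | hx | ⟨l, ⟨-, rfl⟩, hl⟩
  · simp only [List.mem_cons, List.mem_singleton] at hl
    rcases hl with rfl | rfl | h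
    · exact ⟨ha, neg_ne_zero.mpr hp⟩
    · exact ⟨ha', hp⟩
    · simp at h
  · subst hx; exact ⟨ha, hpq⟩
  · simp only [List.mem_cons, List.mem_singleton] at hl
    rcases hl with rfl | rfl | h
    · exact ⟨ha', neg_ne_zero.mpr hq⟩
    · exact ⟨ha, hq⟩
    · simp at h

lemma invariant (a : G) (ha : a ≠ 1) (M : ℤ) (hM : 0 < M) (n : ℕ) (d : ℕ) :
    ∀ j : ℕ, ∃ (α β : ℤ) (l₁ l₂ : List (G × ℤ)),
    (2*(j:ℤ)+1)*M ≤ α ∧ α ≤ (2*(j:ℤ)+2*2^d)*M ∧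
    (2*(j:ℤ)+1)*M ≤ β ∧ β ≤ (2*(j:ℤ)+2*2^d)*M ∧
    Ok l₁ ∧ Ok l₂ ∧
    itc (blkC a M (n+1)) d j = E α (l₁ ++ [(a⁻¹, -β)]) ∧
    (itc (blkC a M (n+1)) d j)⁻¹ = E β (l₂ ++ [(a⁻¹, -α)]) := by
  have ha' : a⁻¹ ≠ 1 := inv_ne_one.mpr ha
  induction d with
  | zero =>
    intro j
    have hj : (0:ℤ) ≤ (j:ℤ) := Int.natCast_nonneg j
    have hp : pexp M j ≠ 0 := by
      have : 0 < pexp M j := by unfold pexp; nlinarith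
      omega
    have hq : qexp M j ≠ 0 := by
      have : 0 < qexp M j := by unfold qexp; nlinarith
      omega
    have hpq : qexp M j - pexp M j = M := by unfold pexp qexp; ring
    have hqp : pexp M j - qexp M j = -M := by unfold pexp qexp; ring
    refine ⟨pexp M j, qexp M j, bbList a n (pexp M j) (qexp M j),
      bbList a n (qexp M j) (pexp M j), ?_, ?_, ?_, ?_, ?_, ?_, ?_, ?_⟩
    · unfold pexp; nlinarith
    · unfold pexp; simp only [pow_zero]; nlinarith
    · unfold qexp; nlinarith
    · unfold qexp; simp only [pow_zero]; nlinarith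
    · exact Ok_bbList ha hp hq (by omega)
    · exact Ok_bbList ha hq hp (by omega)
    · show blkC a M (n+1) j = _
      rw [blkC, bb_eq]
    · show (blkC a M (n+1) j)⁻¹ = _
      rw [blkC, bb_inv, bb_eq]
  | succ d ih =>
    intro j
    obtain ⟨A1, B1, l₁, l₂, hA1l, hA1u, hB1l, hB1u, hl₁, hl₂, hw₁, hw₁i⟩ := ih j
    obtain ⟨A2, B2, m₁, m₂, hA2l, hA2u, hB2l, hB2u, hm₁, hm₂, hw₂, hw₂i⟩ := ih (j + 2^d)
    have hcast : ((j + 2^d : ℕ) : ℤ) = (j:ℤ) + 2^d := by push_cast; ring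
    rw [hcast] at hA2l hA2u hB2l hB2u
    have hpow : (1:ℤ) ≤ 2^d := one_le_pow₀ (by norm_num)
    have hj : (0:ℤ) ≤ (j:ℤ) := Int.natCast_nonneg j
    have h12a : B1 < A2 := by nlinarith
    have h12b : B1 < B2 := by nlinarith
    have h12c : A1 < B2 := by nlinarith
    have h12d : A1 < A2 := by nlinarith
    set W₁ := itc (blkC a M (n+1)) d j with hW₁
    set W₂ := itc (blkC a M (n+1)) d (j + 2^d) with hW₂
    have hstep : itc (blkC a M (n+1)) (d+1) j = W₁ * W₂ * W₁⁻¹ * W₂⁻¹ := by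
      rw [itc, commutatorElement_def]
    have hstepi : (itc (blkC a M (n+1)) (d+1) j)⁻¹ = W₂ * W₁ * W₂⁻¹ * W₁⁻¹ := by
      rw [itc, commutatorElement_inv, commutatorElement_def]
    refine ⟨A1, A2,
      ((l₁ ++ (a⁻¹, -B1 + A2) :: m₁) ++ (a⁻¹, -B2 + B1) :: l₂) ++ (a⁻¹, -A1 + B2) :: m₂,
      ((m₁ ++ (a⁻¹, -B2 + A1) :: l₁) ++ (a⁻¹, -B1 + B2) :: m₂) ++ (a⁻¹, -A2 + B1) :: l₂,
      ?_, ?_, ?_, ?_, ?_, ?_, ?_, ?_⟩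
    · linarith
    · simp only [pow_succ]; nlinarith
    · nlinarith
    · simp only [pow_succ]; nlinarith
    · refine Ok_append.mpr ⟨Ok_append.mpr ⟨Ok_append.mpr ⟨hl₁, Ok_cons.mpr ⟨⟨ha', by omega⟩, hm₁⟩⟩,
        Ok_cons.mpr ⟨⟨ha', by omega⟩, hl₂⟩⟩, Ok_cons.mpr ⟨⟨ha', by omega⟩, hm₂⟩⟩
    · refine Ok_append.mpr ⟨Ok_append.mpr ⟨Ok_append.mpr ⟨hm₁, Ok_cons.mpr ⟨⟨ha', by omega⟩, hl₁⟩⟩,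
        Ok_cons.mpr ⟨⟨ha', by omega⟩, hm₂⟩⟩, Ok_cons.mpr ⟨⟨ha', by omega⟩, hl₂⟩⟩
    · rw [hstep, hw₁i, hw₂i, hw₁, hw₂, mergeE', mergeE', mergeE']
    · rw [hstepi, hw₁i, hw₂i, hw₁, hw₂, mergeE', mergeE', mergeE']

lemma itc_blkC_ne_one (a : G) (ha : a ≠ 1) (M : ℤ) (hM : 0 < M) (n : ℕ) (d : ℕ) :
    itc (blkC a M (n+1)) d 0 ≠ 1 := by
  obtain ⟨A, B, l₁, l₂, hAl, hAu, hBl, hBu, hl₁, hl₂, hw, hwi⟩ := invariant a ha M hM n d 0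
  rw [hw]
  have hA : A ≠ 0 := by
    have : 0 < A := by nlinarith
    omega
  refine E_ne_one A hA _ ?_
  rw [Ok_append]
  refine ⟨hl₁, ?_⟩
  intro x hx
  simp only [List.mem_singleton] at hx
  subst hx
  have : 0 < B := by nlinarith
  exact ⟨inv_ne_one.mpr ha, by omega⟩


/-! ### bridge to `MixedWordGroup` -/

/-- the `x`-hom into the free product -/
def xh : Multiplicative ℤ →* CoprodI (F G) :=
  (CoprodI.of (i := false)).comp (MulEquiv.ulift (α := Multiplicative ℤ)).symm.toMonoidHom

lemma xh_apply (z : ℤ) : (xh (Multiplicative.ofAdd z) : CoprodI (F G)) = xl z := rfl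

/-- the `G`-hom into the free product -/
def glh : G →* CoprodI (F G) := CoprodI.of (M := F G) (i := true)

/-- the embedding of the mixed word group into the indexed free product -/
def toCI : MixedWordGroup G →* CoprodI (F G) :=
  Monoid.Coprod.lift glh xh

lemma toCI_inl (g : G) : toCI (Monoid.Coprod.inl g) = (gl g : CoprodI (F G)) :=
  Monoid.Coprod.lift_apply_inl glh xh g

lemma toCI_xpow (z : ℤ) : toCI ((xGen G) ^ z) = (xl z : CoprodI (F G)) := by
  rw [_root_.map_zpow]
  have h1 : toCI (xGen G) = (xh (Multiplicative.ofAdd (1:ℤ)) : CoprodI (F G)) :=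
    Monoid.Coprod.lift_apply_inr glh xh _
  rw [h1, ← _root_.map_zpow, ← ofAdd_zsmul, smul_eq_mul, mul_one, xh_apply]

/-- the building block as a mixed word -/
def blkW (a : G) (m : ℕ) (n : ℕ) (r : ℕ) : MixedWordGroup G :=
  ((xGen G)^(pexp (m:ℤ) r) * Monoid.Coprod.inl a * (xGen G)^(-(pexp (m:ℤ) r))
      * (Monoid.Coprod.inl a)⁻¹)^n *
  (Monoid.Coprod.inl a * (xGen G)^(qexp (m:ℤ) r) * (Monoid.Coprod.inl a)⁻¹
      * (xGen G)^(-(qexp (m:ℤ) r)))^n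

lemma toCI_blkW (a : G) (m : ℕ) (n : ℕ) (r : ℕ) :
    toCI (blkW a m n r) = blkC a (m:ℤ) n r := by
  simp only [blkW, blkC, bb, _root_.map_mul, _root_.map_pow, _root_.map_inv, toCI_xpow, toCI_inl, gl_inv]

lemma evalWord_inl (γ : G) (g : G) : evalWord γ (Monoid.Coprod.inl g) = g :=
  Monoid.Coprod.lift_apply_inl (MonoidHom.id G) (zpowersHom G γ) g

lemma evalWord_xpow (γ : G) (z : ℤ) : evalWord γ ((xGen G) ^ z) = γ ^ z := by
  rw [_root_.map_zpow]
  have h1 : evalWord γ (xGen G) = γ ^ (1:ℤ) :=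
    Monoid.Coprod.lift_apply_inr (MonoidHom.id G) (zpowersHom G γ) _
  rw [h1, ← _root_.zpow_mul, one_mul]

lemma evalWord_blkW (γ : G) (a : G) (m : ℕ) (n : ℕ) (r : ℕ) :
    evalWord γ (blkW a m n r)
      = (γ^(pexp (m:ℤ) r) * a * γ^(-(pexp (m:ℤ) r)) * a⁻¹)^n
        * (a * γ^(qexp (m:ℤ) r) * a⁻¹ * γ^(-(qexp (m:ℤ) r)))^n := by
  simp only [blkW, _root_.map_mul, _root_.map_pow, _root_.map_inv, evalWord_xpow, evalWord_inl]

end MixedAux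

theorem stmt6 {G : Type*} [Group G] (A : Subgroup G) (hA : A ≠ ⊥)
    (hvs : ∃ S : Subgroup ↥A, S.FiniteIndex ∧ IsSolvable ↥S)
    (hN : (Subgroup.normalizer (A : Set G)).FiniteIndex) :
    ∃ w : MixedWordGroup G, w ≠ 1 ∧ ∀ γ : G, evalWord γ w = 1 := by
  classical
  obtain ⟨S, hSfi, hSsolv⟩ := hvs
  obtain ⟨a, haA, ha⟩ : ∃ x ∈ A, x ≠ (1 : G) := by
    rcases A.bot_or_exists_ne_one with h | h
    · exact absurd h hA
    · exact h
  haveI := hN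
  set K : Subgroup G := (Subgroup.normalizer (A : Set G)).normalCore with hK
  haveI : K.FiniteIndex := Subgroup.finiteIndex_normalCore _
  set m : ℕ := K.index with hm
  have hm0 : m ≠ 0 := Subgroup.FiniteIndex.index_ne_zero
  have hM : (0:ℤ) < (m:ℤ) := by exact_mod_cast Nat.pos_of_ne_zero hm0
  haveI := hSfi
  set S₀ : Subgroup ↥A := S.normalCore with hS₀
  haveI : S₀.FiniteIndex := Subgroup.finiteIndex_normalCore _
  haveI : Group.IsSolvable ↥S := hSsolv
  haveI hsolv₀ : Group.IsSolvable ↥S₀ :=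
    solvable_of_solvable_injective (Subgroup.inclusion_injective (Subgroup.normalCore_le S))
  set T : Subgroup G := S₀.map A.subtype with hT
  haveI : Group.IsSolvable ↥T := by
    have e := Subgroup.equivMapOfInjective S₀ A.subtype A.subtype_injective
    exact solvable_of_surjective (f := e.toMonoidHom) e.surjective
  obtain ⟨d, hd⟩ := (inferInstance : Group.IsSolvable ↥T).solvable
  obtain ⟨n', hn'⟩ : ∃ k, S₀.index = k + 1 :=
    ⟨S₀.index - 1, (Nat.succ_pred_eq_of_pos
      (Nat.pos_of_ne_zero Subgroup.FiniteIndex.index_ne_zero)).symm⟩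
  refine ⟨MixedAux.itc (MixedAux.blkW a m (n'+1)) d 0, ?_, ?_⟩
  · -- nontriviality
    intro hw1
    have h1 : MixedAux.toCI (MixedAux.itc (MixedAux.blkW a m (n'+1)) d 0) = 1 := by
      rw [hw1, _root_.map_one]
    have h2 : MixedAux.toCI (MixedAux.itc (MixedAux.blkW a m (n'+1)) d 0)
        = MixedAux.itc (MixedAux.blkC a (m:ℤ) (n'+1)) d 0 := by
      rw [MixedAux.map_itc]
      congr 1
      funext r
      exact MixedAux.toCI_blkW a m (n'+1) r
    rw [h2] at h1
    exact MixedAux.itc_blkC_ne_one a ha (m:ℤ) hM n' d h1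
  · -- evaluation is trivial
    intro γ
    have hKmem : ∀ z : ℤ, γ ^ (z * (m:ℤ)) ∈ Subgroup.normalizer (A : Set G) := by
      intro z
      refine Subgroup.normalCore_le _ ?_
      rw [_root_.zpow_mul, zpow_natCast]
      exact K.pow_index_mem _
    have hconj : ∀ z : ℤ, ∀ x ∈ A, γ^(z*(m:ℤ)) * x * γ^(-(z*(m:ℤ))) ∈ A := by
      intro z x hx
      have h3 := (Subgroup.mem_normalizer_iff.mp (hKmem z) x).mp hx
      rwa [← _root_.zpow_neg] at h3
    have hTmem : ∀ x ∈ A, x ^ (n'+1) ∈ T := by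
      intro x hx
      have h1 : (⟨x, hx⟩ : ↥A) ^ (n'+1) ∈ S₀ := by
        rw [← hn']
        exact S₀.pow_index_mem _
      refine Subgroup.mem_map.mpr ⟨_, h1, ?_⟩
      simp
    have hblk : ∀ r, evalWord γ (MixedAux.blkW a m (n'+1) r) ∈ T := by
      intro r
      rw [MixedAux.evalWord_blkW]
      refine mul_mem (hTmem _ ?_) (hTmem _ ?_)
      · have h4 := hconj (2*(r:ℤ)+1) a haA
        have h5 : MixedAux.pexp (m:ℤ) r = (2*(r:ℤ)+1) * (m:ℤ) := rfl
        rw [h5]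
        exact mul_mem h4 (inv_mem haA)
      · have h4 := hconj (2*(r:ℤ)+2) a⁻¹ (inv_mem haA)
        have h5 : MixedAux.qexp (m:ℤ) r = (2*(r:ℤ)+2) * (m:ℤ) := rfl
        rw [h5]
        have h6 : a * γ^((2*(r:ℤ)+2) * (m:ℤ)) * a⁻¹ * γ^(-((2*(r:ℤ)+2) * (m:ℤ)))
            = a * (γ^((2*(r:ℤ)+2) * (m:ℤ)) * a⁻¹ * γ^(-((2*(r:ℤ)+2) * (m:ℤ)))) := by
          simp only [mul_assoc]
        rw [h6]
        exact mul_mem haA h4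
    have hmem := MixedAux.itc_mem_derivedSeries
      (fun r => (⟨evalWord γ (MixedAux.blkW a m (n'+1) r), hblk r⟩ : ↥T)) d 0
    rw [hd, Subgroup.mem_bot] at hmem
    calc evalWord γ (MixedAux.itc (MixedAux.blkW a m (n'+1)) d 0)
        = MixedAux.itc (fun r => evalWord γ (MixedAux.blkW a m (n'+1) r)) d 0 :=
          MixedAux.map_itc _ _ d 0
      _ = T.subtype (MixedAux.itc
            (fun r => (⟨evalWord γ (MixedAux.blkW a m (n'+1) r), hblk r⟩ : ↥T)) d 0) := by
          rw [MixedAux.map_itc]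
          rfl
      _ = 1 := by rw [hmem, _root_.map_one]
end

section
/- Let Γ be a group containing a nontrivial subgroup B whose normalizer N_Γ(B) has finite index in Γ and whose centralizer C_Γ(B) is nontrivial. Then Γ satisfies a nontrivial mixed identity: there exists w ∈ Γ∗⟨x⟩ with w ≠ 1 such that w(γ) = 1 for every γ ∈ Γ. -/
open Matrix

theorem neword_prod_ne_one {ι : Type*} {M : ι → Type*} [∀ i, Monoid (M i)] {i j : ι}
    (w : Monoid.CoprodI.NeWord M i j) : w.prod ≠ 1 := by
  classical
  intro h
  have h2 : (Monoid.CoprodI.Word.equiv (M := M)).symm w.toWord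
      = (Monoid.CoprodI.Word.equiv (M := M)).symm Monoid.CoprodI.Word.empty := by
    show w.toWord.prod = Monoid.CoprodI.Word.empty.prod
    rw [Monoid.CoprodI.Word.prod_empty]; exact h
  have h3 := (Monoid.CoprodI.Word.equiv (M := M)).symm.injective h2
  have h4 : w.toWord.toList = [] := by rw [h3]; rfl
  exact w.toList_ne_nil h4

/-- factor family for the comparison with `CoprodI`. -/
abbrev MixedFam (G : Type u) [Group G] : Bool → Type u :=
  fun b => cond b G (ULift (Multiplicative ℤ))

instance mixedFamGroup {G : Type u} [Group G] : ∀ b, Group (MixedFam G b) := by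
  rintro (_|_)
  · exact inferInstanceAs (Group (ULift (Multiplicative ℤ)))
  · exact inferInstanceAs (Group G)

/-- Comparison homomorphism to the indexed free product. -/
def toCoprodI {G : Type u} [Group G] : MixedWordGroup G →* Monoid.CoprodI (MixedFam G) :=
  Monoid.Coprod.lift (Monoid.CoprodI.of (M := MixedFam G) (i := true))
    ((Monoid.CoprodI.of (M := MixedFam G) (i := false)).comp
      (MulEquiv.ulift (α := Multiplicative ℤ)).symm.toMonoidHom)

theorem stmt7 {G : Type*} [Group G] (B : Subgroup G) (hB : B ≠ ⊥)
    (hN : (Subgroup.normalizer (B : Set G)).FiniteIndex)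
    (hC : Subgroup.centralizer (B : Set G) ≠ ⊥) :
    ∃ w : MixedWordGroup G, w ≠ 1 ∧ ∀ γ : G, evalWord γ w = 1 := by
  obtain ⟨⟨b, hbB⟩, hb1⟩ := Subgroup.ne_bot_iff_exists_ne_one.mp hB
  obtain ⟨⟨c, hcC⟩, hc1⟩ := Subgroup.ne_bot_iff_exists_ne_one.mp hC
  simp only [ne_eq, Subgroup.mk_eq_one] at hb1 hc1
  set N := Subgroup.normalizer (B : Set G)
  haveI : N.normalCore.FiniteIndex := Subgroup.finiteIndex_normalCore N
  set k : ℕ := N.normalCore.index with hk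
  have hk0 : k ≠ 0 := Subgroup.FiniteIndex.index_ne_zero
  have hpow : ∀ γ : G, γ ^ k ∈ N := fun γ =>
    N.normalCore_le (N.normalCore.pow_index_mem γ)
  set t : MixedWordGroup G := (xGen G) ^ k with ht
  set ib : MixedWordGroup G := Monoid.Coprod.inl b with hib
  set ic : MixedWordGroup G := Monoid.Coprod.inl c with hic
  refine ⟨t * ib * t⁻¹ * ic * t * ib⁻¹ * t⁻¹ * ic⁻¹, ?_, ?_⟩
  · -- nontriviality via CoprodI
    intro h
    have hz : (ULift.up (Multiplicative.ofAdd (k : ℤ)) : ULift (Multiplicative ℤ)) ≠ 1 := by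
      intro hh
      apply hk0
      have h2 : (k : ℤ) = 0 := by simpa using congrArg ULift.down hh
      exact_mod_cast h2
    have hz' : (ULift.up (Multiplicative.ofAdd (-(k : ℤ))) : ULift (Multiplicative ℤ)) ≠ 1 := by
      intro hh
      apply hk0
      have h2 : -(k : ℤ) = 0 := by simpa using congrArg ULift.down hh
      omega
    have hbt : (false : Bool) ≠ true := by decide
    have htb : (true : Bool) ≠ false := by decide
    let n1 : Monoid.CoprodI.NeWord (MixedFam G) false false :=
      .singleton (i := false) (ULift.up (Multiplicative.ofAdd (k : ℤ))) hz
    let n2 : Monoid.CoprodI.NeWord (MixedFam G) true true :=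
      .singleton (i := true) b hb1
    let n3 : Monoid.CoprodI.NeWord (MixedFam G) false false :=
      .singleton (i := false) (ULift.up (Multiplicative.ofAdd (-(k : ℤ)))) hz'
    let n4 : Monoid.CoprodI.NeWord (MixedFam G) true true :=
      .singleton (i := true) c hc1
    let n6 : Monoid.CoprodI.NeWord (MixedFam G) true true :=
      .singleton (i := true) b⁻¹ (inv_ne_one.mpr hb1)
    let n8 : Monoid.CoprodI.NeWord (MixedFam G) true true :=
      .singleton (i := true) c⁻¹ (inv_ne_one.mpr hc1)
    let nw : Monoid.CoprodI.NeWord (MixedFam G) false true :=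
      .append (.append (.append (.append (.append (.append (.append n1 hbt n2) htb n3)
        hbt n4) htb n1) hbt n6) htb n3) hbt n8
    apply neword_prod_ne_one nw
    have h1 : toCoprodI t
        = Monoid.CoprodI.of (i := false) (ULift.up (Multiplicative.ofAdd (k : ℤ))) := by
      rw [ht, _root_.map_pow]
      have hxg : toCoprodI (xGen G)
          = Monoid.CoprodI.of (M := MixedFam G) (i := false)
            (ULift.up (Multiplicative.ofAdd (1 : ℤ))) :=
        Monoid.Coprod.lift_apply_inr _ _ _
      rw [hxg]
      rw [← _root_.map_pow]
      congr 1
      apply ULift.ext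
      show (Multiplicative.ofAdd (1 : ℤ)) ^ k = Multiplicative.ofAdd (k : ℤ)
      rw [← ofAdd_nsmul]
      norm_num
    have h1' : toCoprodI t⁻¹
        = Monoid.CoprodI.of (i := false) (ULift.up (Multiplicative.ofAdd (-(k : ℤ)))) := by
      rw [_root_.map_inv, h1, ← _root_.map_inv]
      rfl
    have h2 : toCoprodI ib = Monoid.CoprodI.of (M := MixedFam G) (i := true) b :=
      Monoid.Coprod.lift_apply_inl _ _ _
    have h4 : toCoprodI ic = Monoid.CoprodI.of (M := MixedFam G) (i := true) c :=
      Monoid.Coprod.lift_apply_inl _ _ _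
    have h6 : toCoprodI ib⁻¹ = Monoid.CoprodI.of (i := true) b⁻¹ := by
      rw [_root_.map_inv, h2, ← _root_.map_inv]
    have h8 : toCoprodI ic⁻¹ = Monoid.CoprodI.of (i := true) c⁻¹ := by
      rw [_root_.map_inv, h4, ← _root_.map_inv]
    have himg : toCoprodI (t * ib * t⁻¹ * ic * t * ib⁻¹ * t⁻¹ * ic⁻¹) = nw.prod := by
      simp only [_root_.map_mul, h1, h1', h2, h4, h6, h8, nw, n1, n2, n3, n4, n6, n8,
        Monoid.CoprodI.NeWord.append_prod, Monoid.CoprodI.NeWord.prod_singleton]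
    rw [← himg, h, _root_.map_one]
  · intro γ
    have hev_t : evalWord γ t = γ ^ k := by
      rw [ht, _root_.map_pow]
      have hx : evalWord γ (xGen G) = γ := by
        show (zpowersHom G γ) (Multiplicative.ofAdd (1 : ℤ)) = γ
        simp
      rw [hx]
    have hev_b : evalWord γ ib = b := rfl
    have hev_c : evalWord γ ic = c := rfl
    have hd : γ ^ k * b * (γ ^ k)⁻¹ ∈ B :=
      (Subgroup.mem_normalizer_iff.mp (hpow γ) b).mp hbB
    have hcomm : (γ ^ k * b * (γ ^ k)⁻¹) * c = c * (γ ^ k * b * (γ ^ k)⁻¹) :=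
      Subgroup.mem_centralizer_iff.mp hcC _ hd
    simp only [_root_.map_mul, _root_.map_inv, hev_t, hev_b, hev_c]
    set d := γ ^ k * b * (γ ^ k)⁻¹ with hdd
    have hrw : γ ^ k * b * (γ ^ k)⁻¹ * c * γ ^ k * b⁻¹ * (γ ^ k)⁻¹ * c⁻¹
        = d * c * d⁻¹ * c⁻¹ := by
      rw [hdd]; group
    rw [hrw, hcomm]
    group
end

section
/- Fix integers N ≥ 2 and t ≥ 1. Define h : ℤ[1/N] → ℝ_{≥0} by h(r) = max{k, max(0, log_N |r|)} for nonzero r, where r = a/N^k with k ≥ 0 minimal such that N^k·r ∈ ℤ, and h(0) = 0. For a nonzero polynomial f = ∑_I a_I x^I ∈ ℤ[1/N][x₁,…,x_t] (the sum over multi-indices, with |I| = I₁+⋯+I_t), define H(f) = max{ h(a_I) + |I| : a_I ≠ 0 }, and H(0) = 0. Then for all f, g ∈ ℤ[1/N][x₁,…,x_t], H(f·g) ≤ (t+2)·H(f) + H(g). -/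
/-- `ℤ[1/N]` regarded as a subring of `ℚ`: the subring generated by `ℤ` and `1/N`. -/
def ZInvN (N : ℕ) : Subring ℚ := Subring.closure {((N : ℚ))⁻¹}

/-- The minimal `k ≥ 0` such that `N^k · r ∈ ℤ` (for `r ∈ ℤ[1/N]` such a `k` exists). -/
noncomputable def denomExp (N : ℕ) (r : ℚ) : ℕ :=
  sInf {k : ℕ | ∃ a : ℤ, (N : ℚ) ^ k * r = (a : ℚ)}

/-- The height `h(r) = max{k, max(0, log_N |r|)}` for nonzero `r = a/N^k` with `k` minimal
such that `N^k·r ∈ ℤ`, and `h(0) = 0`. -/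
noncomputable def htZ (N : ℕ) (r : ℚ) : ℝ :=
  if r = 0 then 0
  else max (denomExp N r : ℝ) (max 0 (Real.logb N |(r : ℝ)|))

/-- The height `H(f) = max{ h(a_I) + |I| : a_I ≠ 0 }` of a polynomial
`f = ∑_I a_I x^I` over `ℤ[1/N]`, with `H(0) = 0`. -/
noncomputable def polyHt (N t : ℕ) (f : MvPolynomial (Fin t) ↥(ZInvN N)) : ℝ :=
  if hf : f.support.Nonempty then
    f.support.sup' hf
      (fun I => htZ N ((MvPolynomial.coeff I f : ↥(ZInvN N)) : ℚ) + ((I.sum fun _ e => e : ℕ) : ℝ))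
  else 0

def IsIntP (N k : ℕ) (r : ℚ) : Prop := ∃ a : ℤ, (N : ℚ) ^ k * r = (a : ℚ)

lemma isIntP_zero (N k : ℕ) : IsIntP N k 0 := ⟨0, by simp⟩

lemma isIntP_mono {N k m : ℕ} (hkm : k ≤ m) {r : ℚ} (h : IsIntP N k r) : IsIntP N m r := by
  obtain ⟨a, ha⟩ := h
  refine ⟨(N : ℤ) ^ (m - k) * a, ?_⟩
  have hp : (N : ℚ) ^ m = (N : ℚ) ^ (m - k) * (N : ℚ) ^ k := by
    rw [← pow_add]; congr 1; omega
  rw [hp, mul_assoc, ha]; push_cast; ring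

lemma isIntP_add {N k : ℕ} {r s : ℚ} (hr : IsIntP N k r) (hs : IsIntP N k s) :
    IsIntP N k (r + s) := by
  obtain ⟨a, ha⟩ := hr; obtain ⟨b, hb⟩ := hs
  exact ⟨a + b, by rw [mul_add, ha, hb]; push_cast; ring⟩

lemma isIntP_mul {N k l : ℕ} {r s : ℚ} (hr : IsIntP N k r) (hs : IsIntP N l s) :
    IsIntP N (k + l) (r * s) := by
  obtain ⟨a, ha⟩ := hr; obtain ⟨b, hb⟩ := hs
  refine ⟨a * b, ?_⟩
  rw [pow_add]
  push_cast
  rw [← ha, ← hb]; ring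

lemma isIntP_sum {N k : ℕ} {ι : Type*} (S : Finset ι) (r : ι → ℚ)
    (h : ∀ i ∈ S, IsIntP N k (r i)) : IsIntP N k (∑ i ∈ S, r i) := by
  classical
  induction S using Finset.induction_on with
  | empty => simpa using isIntP_zero N k
  | insert _ _ hx ih =>
      rw [Finset.sum_insert hx]
      exact isIntP_add (h _ (Finset.mem_insert_self _ _))
        (ih fun i hi => h i (Finset.mem_insert_of_mem hi))

lemma exists_isIntP {N : ℕ} (hN : 2 ≤ N) {r : ℚ} (hr : r ∈ ZInvN N) : ∃ k, IsIntP N k r := by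
  have hN0 : (N : ℚ) ≠ 0 := by positivity
  induction hr using Subring.closure_induction with
  | mem x hx =>
      rcases hx with rfl
      exact ⟨1, 1, by field_simp; norm_num⟩
  | zero => exact ⟨0, isIntP_zero N 0⟩
  | one => exact ⟨0, 1, by simp⟩
  | add x y hx hy ihx ihy =>
      obtain ⟨k, hk⟩ := ihx; obtain ⟨l, hl⟩ := ihy
      exact ⟨max k l, isIntP_add (isIntP_mono (le_max_left _ _) hk)
        (isIntP_mono (le_max_right _ _) hl)⟩
  | neg x hx ihx =>
      obtain ⟨k, a, ha⟩ := ihx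
      exact ⟨k, -a, by rw [mul_neg, ha]; push_cast; ring⟩
  | mul x y hx hy ihx ihy =>
      obtain ⟨k, hk⟩ := ihx; obtain ⟨l, hl⟩ := ihy
      exact ⟨k + l, isIntP_mul hk hl⟩

lemma denomExp_le {N k : ℕ} {r : ℚ} (h : IsIntP N k r) : denomExp N r ≤ k :=
  Nat.sInf_le h

lemma isIntP_denomExp {N : ℕ} (hN : 2 ≤ N) {r : ℚ} (hr : r ∈ ZInvN N) :
    IsIntP N (denomExp N r) r := by
  obtain ⟨k, hk⟩ := exists_isIntP hN hr
  have hne : {k : ℕ | ∃ a : ℤ, (N : ℚ) ^ k * r = (a : ℚ)}.Nonempty := ⟨k, hk⟩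
  exact Nat.sInf_mem hne

lemma htZ_nonneg (N : ℕ) (r : ℚ) : 0 ≤ htZ N r := by
  unfold htZ
  split
  · exact le_refl 0
  · exact le_max_of_le_right (le_max_left _ _)

lemma denomExp_le_htZ {N : ℕ} {r : ℚ} (hr : r ≠ 0) : (denomExp N r : ℝ) ≤ htZ N r := by
  simp [htZ, hr]

lemma logb_le_htZ (N : ℕ) (r : ℚ) : Real.logb N |(r : ℝ)| ≤ htZ N r := by
  by_cases hr : r = 0
  · simp [htZ, hr]
  · simp only [htZ, hr, if_false]
    exact le_max_of_le_right (le_max_right _ _)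

lemma abs_le_rpow_htZ {N : ℕ} (hN : 2 ≤ N) (r : ℚ) :
    |(r : ℝ)| ≤ (N : ℝ) ^ (htZ N r) := by
  have hN1 : (1 : ℝ) < N := by exact_mod_cast Nat.lt_of_lt_of_le one_lt_two hN
  by_cases hr : r = 0
  · simp only [hr]
    simpa using (Real.rpow_nonneg (by linarith) _)
  · have habs : (0 : ℝ) < |(r : ℝ)| := by
      simp only [abs_pos]
      exact_mod_cast hr
    calc |(r : ℝ)| = (N : ℝ) ^ (Real.logb N |(r : ℝ)|) :=
          (Real.rpow_logb (by linarith) (by linarith) habs).symm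
      _ ≤ (N : ℝ) ^ (htZ N r) :=
          Real.rpow_le_rpow_of_exponent_le (le_of_lt hN1) (logb_le_htZ N r)

open MvPolynomial in
lemma polyHt_nonneg (N t : ℕ) (f : MvPolynomial (Fin t) ↥(ZInvN N)) : 0 ≤ polyHt N t f := by
  unfold polyHt
  split
  · next hf =>
      obtain ⟨I, hI⟩ := hf
      refine le_trans ?_ (Finset.le_sup' _ hI)
      have := htZ_nonneg N ((coeff I f : ↥(ZInvN N)) : ℚ)
      positivity
  · exact le_refl 0

open MvPolynomial in
lemma coeff_le_polyHt {N t : ℕ} {f : MvPolynomial (Fin t) ↥(ZInvN N)} {J : Fin t →₀ ℕ}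
    (hJ : J ∈ f.support) :
    htZ N ((coeff J f : ↥(ZInvN N)) : ℚ) + ((J.sum fun _ e => e : ℕ) : ℝ) ≤ polyHt N t f := by
  unfold polyHt
  split
  · exact Finset.le_sup'
      (fun I => htZ N ((coeff I f : ↥(ZInvN N)) : ℚ) + ((I.sum fun _ e => e : ℕ) : ℝ)) hJ
  · next hf => exact absurd ⟨J, hJ⟩ hf

open MvPolynomial in
lemma polyHt_le {N t : ℕ} {f : MvPolynomial (Fin t) ↥(ZInvN N)} {B : ℝ} (hB : 0 ≤ B)
    (h : ∀ I ∈ f.support,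
      htZ N ((coeff I f : ↥(ZInvN N)) : ℚ) + ((I.sum fun _ e => e : ℕ) : ℝ) ≤ B) :
    polyHt N t f ≤ B := by
  unfold polyHt
  split
  · exact Finset.sup'_le _ _ h
  · exact hB

/-- weight of a multi-index -/
def wt {t : ℕ} (I : Fin t →₀ ℕ) : ℕ := I.sum fun _ e => e

lemma wt_add {t : ℕ} (J K : Fin t →₀ ℕ) : wt (J + K) = wt J + wt K := by
  unfold wt
  exact Finsupp.sum_add_index' (fun _ => rfl) (fun _ _ _ => rfl)

open MvPolynomial in
lemma card_support_le {N t : ℕ} (f : MvPolynomial (Fin t) ↥(ZInvN N)) :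
    f.support.card ≤ (f.totalDegree + 1) ^ t := by
  classical
  have hJi : ∀ J ∈ f.support, ∀ i : Fin t, J i < f.totalDegree + 1 := by
    intro J hJ i
    have h1 : J i ≤ J.sum fun _ e => e := by
      by_cases hi : i ∈ J.support
      · rw [Finsupp.sum]
        exact Finset.single_le_sum (f := fun i => J i) (fun _ _ => Nat.zero_le _) hi
      · simp [Finsupp.notMem_support_iff.mp hi]
    exact Nat.lt_succ_of_le (h1.trans (le_totalDegree hJ))
  have := Finset.card_le_card_of_injOn
    (f := fun (J : Fin t →₀ ℕ) => fun i : Fin t => (⟨min (J i) f.totalDegree, by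
      exact Nat.lt_succ_of_le (min_le_right _ _)⟩ : Fin (f.totalDegree + 1)))
    (s := f.support) (t := Finset.univ) (fun a _ => Finset.mem_univ _) ?_
  · calc f.support.card ≤ (Finset.univ : Finset (Fin t → Fin (f.totalDegree + 1))).card := this
      _ = (f.totalDegree + 1) ^ t := by
          rw [Finset.card_univ, Fintype.card_fun]
          simp
  · intro J hJ K hK h
    ext i
    have := congrFun h i
    have hJ' : min (J i) f.totalDegree = J i := min_eq_left (Nat.lt_succ_iff.mp (hJi J hJ i))
    have hK' : min (K i) f.totalDegree = K i := min_eq_left (Nat.lt_succ_iff.mp (hJi K hK i))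
    have : min (J i) f.totalDegree = min (K i) f.totalDegree := by
      simpa using congrFun h i
    omega

lemma isIntP_sup_sum {N : ℕ} {ι : Type*} (S : Finset ι) (r : ι → ℚ) (d : ι → ℕ)
    (h : ∀ i ∈ S, IsIntP N (d i) (r i)) : IsIntP N (S.sup d) (∑ i ∈ S, r i) :=
  isIntP_sum _ _ (fun i hi => isIntP_mono (Finset.le_sup hi) (h i hi))

open MvPolynomial in
lemma card_support_le_rpow {N t : ℕ} (hN : 2 ≤ N) (f : MvPolynomial (Fin t) ↥(ZInvN N)) :
    (f.support.card : ℝ) ≤ (N : ℝ) ^ ((t : ℝ) * polyHt N t f) := by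
  have hN1 : (1 : ℝ) < N := by exact_mod_cast Nat.lt_of_lt_of_le one_lt_two hN
  by_cases hf : f.support.Nonempty
  · set D := f.totalDegree with hD
    -- D ≤ polyHt
    have hDle : (D : ℝ) ≤ polyHt N t f := by
      obtain ⟨J0, hJ0, hsup⟩ := Finset.exists_mem_eq_sup f.support hf
        (fun J => J.sum fun _ e => e)
      have : (D : ℝ) = ((J0.sum fun _ e => e : ℕ) : ℝ) := by
        rw [hD, totalDegree, hsup]
      rw [this]
      have h1 := coeff_le_polyHt hJ0
      have h2 := htZ_nonneg N ((coeff J0 f : ↥(ZInvN N)) : ℚ)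
      linarith
    have h1 : ((D : ℝ) + 1) ≤ (N : ℝ) ^ ((D : ℝ)) := by
      have hn : (D + 1 : ℕ) ≤ N ^ D := by
        calc D + 1 ≤ 2 ^ D := Nat.lt_two_pow_self
          _ ≤ N ^ D := Nat.pow_le_pow_left hN D
      calc ((D : ℝ) + 1) = ((D + 1 : ℕ) : ℝ) := by push_cast; ring
        _ ≤ ((N ^ D : ℕ) : ℝ) := by exact_mod_cast hn
        _ = (N : ℝ) ^ ((D : ℝ)) := by
            push_cast
            exact (Real.rpow_natCast _ D).symm
    calc (f.support.card : ℝ) ≤ ((D + 1) ^ t : ℕ) := by exact_mod_cast card_support_le f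
      _ = ((D : ℝ) + 1) ^ t := by push_cast; ring
      _ ≤ ((N : ℝ) ^ ((D : ℝ))) ^ t := by
          exact pow_le_pow_left₀ (by positivity) h1 t
      _ = (N : ℝ) ^ ((D : ℝ) * t) := by
          rw [Real.rpow_mul (by linarith : (0:ℝ) ≤ (N:ℝ))]
          exact (Real.rpow_natCast _ t).symm
      _ ≤ (N : ℝ) ^ ((t : ℝ) * polyHt N t f) := by
          apply Real.rpow_le_rpow_of_exponent_le (le_of_lt hN1)
          have ht0 : (0 : ℝ) ≤ (t : ℝ) := Nat.cast_nonneg t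
          nlinarith
  · rw [Finset.not_nonempty_iff_eq_empty.mp hf]
    simp only [Finset.card_empty, Nat.cast_zero]
    positivity

set_option maxHeartbeats 1000000 in
open MvPolynomial in
lemma stmt13_aux (N t : ℕ) (hN : 2 ≤ N) (ht : 1 ≤ t)
    (f g : MvPolynomial (Fin t) ↥(ZInvN N)) :
    polyHt N t (f * g) ≤ (t + 2) * polyHt N t f + polyHt N t g := by
  classical
  have hN1 : (1 : ℝ) < N := by exact_mod_cast Nat.lt_of_lt_of_le one_lt_two hN
  have hHf0 := polyHt_nonneg N t f
  have hHg0 := polyHt_nonneg N t g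
  have hrhs0 : 0 ≤ ((t : ℝ) + 2) * polyHt N t f + polyHt N t g := by positivity
  apply polyHt_le hrhs0
  intro I hI
  have hcne : coeff I (f * g) ≠ 0 := mem_support_iff.mp hI
  set c : ℚ := ((coeff I (f * g) : ↥(ZInvN N)) : ℚ) with hc
  have hc0 : c ≠ 0 := by
    simp only [hc, ne_eq, ZeroMemClass.coe_eq_zero]
    exact hcne
  -- the coefficient as a sum over the antidiagonal
  have hsum : c = ∑ p ∈ Finset.HasAntidiagonal.antidiagonal I,
      ((coeff p.1 f : ↥(ZInvN N)) : ℚ) * ((coeff p.2 g : ↥(ZInvN N)) : ℚ) := by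
    rw [hc, coeff_mul]
    push_cast
    rfl
  set S := (Finset.HasAntidiagonal.antidiagonal I).filter
    (fun p => ((coeff p.1 f : ↥(ZInvN N)) : ℚ) * ((coeff p.2 g : ↥(ZInvN N)) : ℚ) ≠ 0) with hSdef
  have hsumS : c = ∑ p ∈ S,
      ((coeff p.1 f : ↥(ZInvN N)) : ℚ) * ((coeff p.2 g : ↥(ZInvN N)) : ℚ) := by
    rw [hsum, hSdef]
    exact (Finset.sum_filter_ne_zero _).symm
  have hSne : S.Nonempty := by
    by_contra h
    rw [Finset.not_nonempty_iff_eq_empty] at h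
    exact hc0 (by rw [hsumS, h, Finset.sum_empty])
  -- membership facts for pairs in S
  have hmem : ∀ p ∈ S, p.1 ∈ f.support ∧ p.2 ∈ g.support ∧ p.1 + p.2 = I := by
    intro p hp
    rw [hSdef, Finset.mem_filter] at hp
    obtain ⟨hp1, hp2⟩ := hp
    have h1 : ((coeff p.1 f : ↥(ZInvN N)) : ℚ) ≠ 0 := left_ne_zero_of_mul hp2
    have h2 : ((coeff p.2 g : ↥(ZInvN N)) : ℚ) ≠ 0 := right_ne_zero_of_mul hp2
    refine ⟨mem_support_iff.mpr ?_, mem_support_iff.mpr ?_, Finset.HasAntidiagonal.mem_antidiagonal.mp hp1⟩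
    · exact fun h => h1 (by rw [h]; simp)
    · exact fun h => h2 (by rw [h]; simp)
  -- per-pair basic bounds
  have hpairf : ∀ p ∈ S,
      (denomExp N ((coeff p.1 f : ↥(ZInvN N)) : ℚ) : ℝ) ≤ polyHt N t f - (wt p.1 : ℝ) ∧
      |(((coeff p.1 f : ↥(ZInvN N)) : ℚ) : ℝ)| ≤ (N : ℝ) ^ (polyHt N t f - (wt p.1 : ℝ)) ∧
      (wt p.1 : ℝ) ≤ polyHt N t f := by
    intro p hp
    obtain ⟨h1, -, -⟩ := hmem p hp
    have hle := coeff_le_polyHt h1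
    have hnz : ((coeff p.1 f : ↥(ZInvN N)) : ℚ) ≠ 0 := by
      have := mem_support_iff.mp h1
      exact fun h => this (by exact_mod_cast h)
    have hd := denomExp_le_htZ (N := N) hnz
    have hab := abs_le_rpow_htZ hN ((coeff p.1 f : ↥(ZInvN N)) : ℚ)
    have hh0 := htZ_nonneg N ((coeff p.1 f : ↥(ZInvN N)) : ℚ)
    refine ⟨by unfold wt; linarith, ?_, by unfold wt; linarith⟩
    refine hab.trans (Real.rpow_le_rpow_of_exponent_le (le_of_lt hN1) ?_)
    unfold wt; linarith
  have hpairg : ∀ p ∈ S,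
      (denomExp N ((coeff p.2 g : ↥(ZInvN N)) : ℚ) : ℝ) ≤ polyHt N t g - (wt p.2 : ℝ) ∧
      |(((coeff p.2 g : ↥(ZInvN N)) : ℚ) : ℝ)| ≤ (N : ℝ) ^ (polyHt N t g - (wt p.2 : ℝ)) ∧
      (wt p.2 : ℝ) ≤ polyHt N t g := by
    intro p hp
    obtain ⟨-, h1, -⟩ := hmem p hp
    have hle := coeff_le_polyHt h1
    have hnz : ((coeff p.2 g : ↥(ZInvN N)) : ℚ) ≠ 0 := by
      have := mem_support_iff.mp h1
      exact fun h => this (by exact_mod_cast h)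
    have hd := denomExp_le_htZ (N := N) hnz
    have hab := abs_le_rpow_htZ hN ((coeff p.2 g : ↥(ZInvN N)) : ℚ)
    have hh0 := htZ_nonneg N ((coeff p.2 g : ↥(ZInvN N)) : ℚ)
    refine ⟨by unfold wt; linarith, ?_, by unfold wt; linarith⟩
    refine hab.trans (Real.rpow_le_rpow_of_exponent_le (le_of_lt hN1) ?_)
    unfold wt; linarith
  have hwtI : ∀ p ∈ S, (wt I : ℝ) = (wt p.1 : ℝ) + (wt p.2 : ℝ) := by
    intro p hp
    obtain ⟨-, -, h3⟩ := hmem p hp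
    rw [← h3, wt_add]
    push_cast; ring
  -- wI ≤ Hf + Hg
  obtain ⟨p0, hp0⟩ := id hSne
  have hwI : (wt I : ℝ) ≤ polyHt N t f + polyHt N t g := by
    have h1 := (hpairf p0 hp0).2.2
    have h2 := (hpairg p0 hp0).2.2
    have h3 := hwtI p0 hp0
    linarith
  -- denominator bound
  have hdenom : (denomExp N c : ℝ) ≤ polyHt N t f + polyHt N t g - (wt I : ℝ) := by
    set m := S.sup (fun p => denomExp N ((coeff p.1 f : ↥(ZInvN N)) : ℚ)
      + denomExp N ((coeff p.2 g : ↥(ZInvN N)) : ℚ)) with hm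
    have hint : IsIntP N m c := by
      rw [hsumS, hm]
      exact isIntP_sup_sum S _ _ (fun p hp =>
        isIntP_mul (isIntP_denomExp hN (coeff p.1 f).2) (isIntP_denomExp hN (coeff p.2 g).2))
    have hd1 : denomExp N c ≤ m := denomExp_le hint
    obtain ⟨q, hq, hqe⟩ := Finset.exists_mem_eq_sup S hSne
      (fun p => denomExp N ((coeff p.1 f : ↥(ZInvN N)) : ℚ)
        + denomExp N ((coeff p.2 g : ↥(ZInvN N)) : ℚ))
    have h1 := (hpairf q hq).1
    have h2 := (hpairg q hq).1
    have h3 := hwtI q hq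
    have hmr : (m : ℝ) = (denomExp N ((coeff q.1 f : ↥(ZInvN N)) : ℚ) : ℝ)
        + (denomExp N ((coeff q.2 g : ↥(ZInvN N)) : ℚ) : ℝ) := by
      rw [hm, hqe]; push_cast; ring
    have hd1r : (denomExp N c : ℝ) ≤ (m : ℝ) := by exact_mod_cast hd1
    linarith
  -- archimedean bound
  have habs : |(c : ℝ)| ≤ (N : ℝ) ^ ((t : ℝ) * polyHt N t f
      + (polyHt N t f + polyHt N t g - (wt I : ℝ))) := by
    have hterm : ∀ p ∈ S, |(((coeff p.1 f : ↥(ZInvN N)) : ℚ) : ℝ)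
        * (((coeff p.2 g : ↥(ZInvN N)) : ℚ) : ℝ)|
        ≤ (N : ℝ) ^ (polyHt N t f + polyHt N t g - (wt I : ℝ)) := by
      intro p hp
      rw [abs_mul]
      have h1 := (hpairf p hp).2.1
      have h2 := (hpairg p hp).2.1
      calc |(((coeff p.1 f : ↥(ZInvN N)) : ℚ) : ℝ)| * |(((coeff p.2 g : ↥(ZInvN N)) : ℚ) : ℝ)|
          ≤ (N : ℝ) ^ (polyHt N t f - (wt p.1 : ℝ)) * (N : ℝ) ^ (polyHt N t g - (wt p.2 : ℝ)) :=
            mul_le_mul h1 h2 (abs_nonneg _) (by positivity)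
        _ = (N : ℝ) ^ (polyHt N t f - (wt p.1 : ℝ) + (polyHt N t g - (wt p.2 : ℝ))) :=
            (Real.rpow_add (by linarith) _ _).symm
        _ = (N : ℝ) ^ (polyHt N t f + polyHt N t g - (wt I : ℝ)) := by
            rw [hwtI p hp]; ring_nf
    have hcsum : (c : ℝ) = ∑ p ∈ S, (((coeff p.1 f : ↥(ZInvN N)) : ℚ) : ℝ)
        * (((coeff p.2 g : ↥(ZInvN N)) : ℚ) : ℝ) := by
      rw [hsumS]; push_cast; ring
    have hcard : (S.card : ℝ) ≤ (N : ℝ) ^ ((t : ℝ) * polyHt N t f) := by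
      have h1 : S.card ≤ f.support.card := by
        apply Finset.card_le_card_of_injOn (fun p => p.1)
        · intro p hp; exact (hmem p hp).1
        · intro p hp q hq h
          have hp3 := (hmem p (by exact hp)).2.2
          have hq3 := (hmem q (by exact hq)).2.2
          have : p.2 = q.2 := by
            have := hp3.trans hq3.symm
            simp only [h] at this
            exact add_left_cancel this
          exact Prod.ext h this
      calc (S.card : ℝ) ≤ (f.support.card : ℝ) := by exact_mod_cast h1
        _ ≤ (N : ℝ) ^ ((t : ℝ) * polyHt N t f) := card_support_le_rpow hN f
    calc |(c : ℝ)| ≤ ∑ p ∈ S, |(((coeff p.1 f : ↥(ZInvN N)) : ℚ) : ℝ)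
          * (((coeff p.2 g : ↥(ZInvN N)) : ℚ) : ℝ)| := by
          rw [hcsum]; exact Finset.abs_sum_le_sum_abs _ _
      _ ≤ S.card • ((N : ℝ) ^ (polyHt N t f + polyHt N t g - (wt I : ℝ))) :=
          Finset.sum_le_card_nsmul _ _ _ hterm
      _ = (S.card : ℝ) * (N : ℝ) ^ (polyHt N t f + polyHt N t g - (wt I : ℝ)) := by
          rw [nsmul_eq_mul]
      _ ≤ (N : ℝ) ^ ((t : ℝ) * polyHt N t f)
          * (N : ℝ) ^ (polyHt N t f + polyHt N t g - (wt I : ℝ)) := by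
          apply mul_le_mul_of_nonneg_right hcard (by positivity)
      _ = (N : ℝ) ^ ((t : ℝ) * polyHt N t f + (polyHt N t f + polyHt N t g - (wt I : ℝ))) :=
          (Real.rpow_add (by linarith) _ _).symm
  have hlogb : Real.logb N |(c : ℝ)|
      ≤ (t : ℝ) * polyHt N t f + (polyHt N t f + polyHt N t g - (wt I : ℝ)) := by
    have hcpos : (0 : ℝ) < |(c : ℝ)| := by
      simp only [abs_pos]
      exact_mod_cast hc0
    rw [Real.logb_le_iff_le_rpow hN1 hcpos]
    exact habs
  -- final assembly
  have hgoal : htZ N c + (wt I : ℝ) ≤ ((t : ℝ) + 2) * polyHt N t f + polyHt N t g := by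
    rw [htZ, if_neg hc0]
    have hx : (t : ℝ) * polyHt N t f ≤ ((t : ℝ) + 1) * polyHt N t f := by nlinarith
    have hy : polyHt N t f ≤ ((t : ℝ) + 2) * polyHt N t f := by nlinarith
    have hmax : max (denomExp N c : ℝ) (max 0 (Real.logb N |(c : ℝ)|))
        ≤ ((t : ℝ) + 2) * polyHt N t f + polyHt N t g - (wt I : ℝ) := by
      apply max_le
      · linarith
      · apply max_le
        · linarith
        · linarith
    linarith
  exact hgoal

theorem stmt13 (N t : ℕ) (hN : 2 ≤ N) (ht : 1 ≤ t)
    (f g : MvPolynomial (Fin t) ↥(ZInvN N)) :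
    polyHt N t (f * g) ≤ (t + 2) * polyHt N t f + polyHt N t g := by
  exact stmt13_aux N t hN ht f g
end
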